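/- Let a sequence satisfy α_{n+1} = (1 − β_n/(n+ξ))α_n + γ_n for n ≥ n₀, where β_n → β > 0, γ_n → γ, and ξ is a real constant with n + ξ > β_n for n ≥ n₀. Then α_n/n → γ/(1+β). -/

import Mathlib

open Filter

theorem chung_lu_recurrence (α β γ : ℕ → ℝ) (ξ B G : ℝ) (n₀ : ℕ)
    (hB : 0 < B)
    (hβ : Tendsto β atTop (nhds B))
    (hγ : Tendsto γ atTop (nhds G))
    (hpos : ∀ n : ℕ, n₀ ≤ n → β n < (n : ℝ) + ξ)
    (hrec : ∀ n : ℕ, n₀ ≤ n →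
      α (n + 1) = (1 - β n / ((n : ℝ) + ξ)) * α n + γ n) :
    Tendsto (fun n : ℕ => α n / n) atTop (nhds (G / (1 + B))) := by
  set L := G / (1 + B) with hL
  set e : ℕ → ℝ := fun n => α n - L * n with he
  set δ : ℕ → ℝ := fun n => γ n - L - L * ((n : ℝ) * β n / ((n : ℝ) + ξ)) with hδdef
  have h1B : (1 : ℝ) + B ≠ 0 := by linarith
  have hatop : Tendsto (fun n : ℕ => (n : ℝ) + ξ) atTop atTop :=
    tendsto_atTop_add_const_right _ ξ tendsto_natCast_atTop_atTop
  have hxipos : ∀ᶠ n : ℕ in atTop, 0 < (n : ℝ) + ξ := hatop.eventually_gt_atTop 0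
  have hfrac : Tendsto (fun n : ℕ => (n : ℝ) / ((n : ℝ) + ξ)) atTop (nhds 1) := by
    have h0 : Tendsto (fun n : ℕ => ξ / ((n : ℝ) + ξ)) atTop (nhds 0) :=
      tendsto_const_nhds.div_atTop hatop
    have h1 := (tendsto_const_nhds (x := (1:ℝ)) (f := atTop (α := ℕ))).sub h0
    rw [sub_zero] at h1
    refine h1.congr' ?_
    filter_upwards [hxipos] with n hn
    field_simp
    ring
  have hprod : Tendsto (fun n : ℕ => (n : ℝ) * β n / ((n : ℝ) + ξ)) atTop (nhds B) := by
    have h := hfrac.mul hβ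
    rw [one_mul] at h
    refine h.congr fun n => by ring
  have hδ : Tendsto δ atTop (nhds 0) := by
    have h := (hγ.sub (tendsto_const_nhds (x := L))).sub ((tendsto_const_nhds (x := L)).mul hprod)
    have hval : G - L - L * B = 0 := by
      rw [hL]; field_simp; ring
    rw [hval] at h
    exact h
  have herec : ∀ n : ℕ, n₀ ≤ n → e (n + 1) = (1 - β n / ((n : ℝ) + ξ)) * e n + δ n := by
    intro n hn
    simp only [he, hδdef]
    rw [hrec n hn]
    push_cast
    ring
  -- main: e n / n → 0
  have he0 : Tendsto (fun n : ℕ => e n / n) atTop (nhds 0) := by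
    rw [Metric.tendsto_atTop]
    intro ε hε
    have hε' : 0 < ε / 3 := by linarith
    have hβpos : ∀ᶠ n in atTop, 0 < β n := hβ.eventually (lt_mem_nhds hB)
    have hδsmall : ∀ᶠ n in atTop, |δ n| ≤ ε / 3 := by
      have := hδ.eventually (Metric.closedBall_mem_nhds 0 hε')
      filter_upwards [this] with n hn
      simpa [Real.dist_eq] using hn
    obtain ⟨N, hN⟩ := eventually_atTop.mp
      ((hβpos.and hδsmall).and (eventually_ge_atTop n₀))
    have step : ∀ n, N ≤ n → |e (n + 1)| ≤ |e n| + ε / 3 := by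
      intro n hn
      obtain ⟨⟨hb, hd⟩, hn0⟩ := hN n hn
      have hlt := hpos n hn0
      have hden : 0 < (n : ℝ) + ξ := lt_trans hb hlt
      have hq0 : 0 ≤ 1 - β n / ((n : ℝ) + ξ) := by
        have : β n / ((n : ℝ) + ξ) ≤ 1 := by
          rw [div_le_one hden]; linarith
        linarith
      have hq1 : |1 - β n / ((n : ℝ) + ξ)| ≤ 1 := by
        rw [abs_of_nonneg hq0]
        have : 0 ≤ β n / ((n : ℝ) + ξ) := div_nonneg hb.le hden.le
        linarith
      rw [herec n hn0]
      calc |(1 - β n / ((n : ℝ) + ξ)) * e n + δ n|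
          ≤ |(1 - β n / ((n : ℝ) + ξ)) * e n| + |δ n| := abs_add_le _ _
        _ = |1 - β n / ((n : ℝ) + ξ)| * |e n| + |δ n| := by rw [abs_mul]
        _ ≤ 1 * |e n| + ε / 3 := by gcongr
        _ = |e n| + ε / 3 := by rw [one_mul]
    have bound : ∀ k : ℕ, |e (N + k)| ≤ |e N| + k * (ε / 3) := by
      intro k
      induction k with
      | zero => simp
      | succ k ih =>
        have := step (N + k) (Nat.le_add_right _ _)
        push_cast
        calc |e (N + (k + 1))| = |e (N + k + 1)| := by ring_nf
          _ ≤ |e (N + k)| + ε / 3 := this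
          _ ≤ |e N| + k * (ε / 3) + ε / 3 := by linarith
          _ = |e N| + (k + 1) * (ε / 3) := by ring
    set M : ℕ := max (N + 1) (⌈|e N| / (ε / 3)⌉₊ + 1) with hM
    have hMN : N ≤ M := le_trans (Nat.le_succ N) (le_max_left _ _)
    have hM1 : 1 ≤ M := le_trans (Nat.one_le_iff_ne_zero.mpr (Nat.succ_ne_zero N)) (le_max_left _ _)
    have hMe : |e N| < M * (ε / 3) := by
      have h1 : |e N| / (ε / 3) < M := by
        have h2 : (⌈|e N| / (ε / 3)⌉₊ : ℝ) < M := by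
          have : ⌈|e N| / (ε / 3)⌉₊ < M := lt_of_lt_of_le (Nat.lt_succ_self _) (le_max_right _ _)
          exact_mod_cast this
        exact lt_of_le_of_lt (Nat.le_ceil _) h2
      rwa [div_lt_iff₀ hε'] at h1
    refine ⟨M, fun n hn => ?_⟩
    have hnN : N ≤ n := le_trans hMN hn
    have hn1 : (1 : ℝ) ≤ n := by exact_mod_cast le_trans hM1 hn
    have hnpos : (0 : ℝ) < n := by linarith
    have hbnd : |e n| ≤ |e N| + (n - N : ℕ) * (ε / 3) := by
      have := bound (n - N)
      rwa [Nat.add_sub_cancel' hnN] at this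
    have hsub : ((n - N : ℕ) : ℝ) ≤ n := by
      exact_mod_cast le_trans (Nat.sub_le n N) le_rfl
    have hMn : (M : ℝ) ≤ n := by exact_mod_cast hn
    have hen : |e n| < 2 * n * (ε / 3) := by
      have h1 : |e N| < (n : ℝ) * (ε / 3) := lt_of_lt_of_le hMe (by gcongr)
      have h2 : ((n - N : ℕ) : ℝ) * (ε / 3) ≤ n * (ε / 3) := by gcongr
      calc |e n| ≤ |e N| + (n - N : ℕ) * (ε / 3) := hbnd
        _ < n * (ε / 3) + n * (ε / 3) := by linarith
        _ = 2 * n * (ε / 3) := by ring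
    rw [Real.dist_eq, sub_zero, abs_div, abs_of_pos hnpos, div_lt_iff₀ hnpos]
    calc |e n| < 2 * n * (ε / 3) := hen
      _ ≤ ε * n := by nlinarith
  have hfinal : Tendsto (fun n : ℕ => L + e n / n) atTop (nhds L) := by
    have := (tendsto_const_nhds (x := L) (f := atTop (α := ℕ))).add he0
    rwa [add_zero] at this
  refine hfinal.congr' ?_
  filter_upwards [eventually_ge_atTop 1] with n hn
  have hn0 : (n : ℝ) ≠ 0 := by positivity
  simp only [he]
  field_simp
  ring
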